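/- The family of Kepler orbits with fixed energy E, written in reciprocal-polar form ρ(θ) = 1/r(θ), satisfies the second-order ODE ρ'' = (ρ² + ρ'²)/(2(ρ + E)) − ρ, and for this ODE the Tresse relative invariant I₂ = D²f_{pp} − 4Df_{pρ} + f_p(4f_{pρ} − Df_{pp}) − 3f_{pp}f_ρ + 6f_{ρρ} (with p = ρ', f(θ,ρ,p) = (ρ²+p²)/(2(ρ+E)) − ρ, D = ∂_θ + p∂_ρ + f∂_p) equals 9E²/(E+ρ)³; in particular I₂ ≠ 0 whenever E ≠ 0. -/

import Mathlib

open Real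

/-- Partial derivative in the first (θ) variable. -/
noncomputable def pdθ (g : ℝ → ℝ → ℝ → ℝ) : ℝ → ℝ → ℝ → ℝ :=
  fun θ ρ p => deriv (fun t => g t ρ p) θ

/-- Partial derivative in the second (ρ) variable. -/
noncomputable def pdρ (g : ℝ → ℝ → ℝ → ℝ) : ℝ → ℝ → ℝ → ℝ :=
  fun θ ρ p => deriv (fun t => g θ t p) ρ

/-- Partial derivative in the third (p = ρ') variable. -/
noncomputable def pdp (g : ℝ → ℝ → ℝ → ℝ) : ℝ → ℝ → ℝ → ℝ :=
  fun θ ρ p => deriv (fun t => g θ ρ t) p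

/-- Total derivative operator `D = ∂_θ + p ∂_ρ + f ∂_p` of the ODE `ρ'' = f`. -/
noncomputable def Dop (f g : ℝ → ℝ → ℝ → ℝ) : ℝ → ℝ → ℝ → ℝ :=
  fun θ ρ p => pdθ g θ ρ p + p * pdρ g θ ρ p + f θ ρ p * pdp g θ ρ p

/-- Tresse relative invariant
`I₂ = D²f_pp − 4Df_pρ + f_p(4f_pρ − Df_pp) − 3f_pp f_ρ + 6f_ρρ`. -/
noncomputable def tresseI₂ (f : ℝ → ℝ → ℝ → ℝ) : ℝ → ℝ → ℝ → ℝ :=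
  fun θ ρ p =>
    Dop f (Dop f (pdp (pdp f))) θ ρ p
      - 4 * Dop f (pdρ (pdp f)) θ ρ p
      + pdp f θ ρ p * (4 * pdρ (pdp f) θ ρ p - Dop f (pdp (pdp f)) θ ρ p)
      - 3 * pdp (pdp f) θ ρ p * pdρ f θ ρ p
      + 6 * pdρ (pdρ f) θ ρ p

/-- Right-hand side of the fixed-energy Kepler ODE `ρ'' = (ρ²+p²)/(2(ρ+E)) − ρ`. -/
noncomputable def keplerF (E : ℝ) : ℝ → ℝ → ℝ → ℝ :=
  fun _ ρ p => (ρ ^ 2 + p ^ 2) / (2 * (ρ + E)) - ρ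

/-! helpers -/

lemma kepler_pdθ_zero (g : ℝ → ℝ → ℝ → ℝ) (θ ρ p : ℝ)
    (h : ∀ t, g t ρ p = g θ ρ p) : pdθ g θ ρ p = 0 := by
  unfold pdθ; rw [funext h]; exact deriv_const θ _

lemma kepler_pdp_eq (g : ℝ → ℝ → ℝ → ℝ) (θ ρ p : ℝ) (F : ℝ → ℝ)
    (h : ∀ t, g θ ρ t = F t) : pdp g θ ρ p = deriv F p := by
  unfold pdp; rw [funext h]

lemma kepler_pdρ_eq (g : ℝ → ℝ → ℝ → ℝ) (θ ρ p : ℝ) (F : ℝ → ℝ)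
    (h : ∀ᶠ t in nhds ρ, g θ t p = F t) : pdρ g θ ρ p = deriv F ρ :=
  Filter.EventuallyEq.deriv_eq h

lemma kepler_nhds_ne (E ρ : ℝ) (hρ : ρ + E ≠ 0) : ∀ᶠ t in nhds ρ, t + E ≠ 0 :=
  ((continuous_add_right E).continuousAt).eventually_ne hρ

/-! first derivatives -/

lemma kepler_fp (E θ ρ p : ℝ) : pdp (keplerF E) θ ρ p = p / (ρ + E) := by
  rw [kepler_pdp_eq _ θ ρ p (fun t => (ρ ^ 2 + t ^ 2) / (2 * (ρ + E)) - ρ) (fun t => rfl)]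
  have h : HasDerivAt (fun t : ℝ => (ρ ^ 2 + t ^ 2) / (2 * (ρ + E)) - ρ)
      ((2 * p ^ 1) / (2 * (ρ + E))) p :=
    (((hasDerivAt_pow 2 p).const_add (ρ ^ 2)).div_const (2 * (ρ + E))).sub_const ρ
  rw [h.deriv, pow_one, mul_div_mul_left p (ρ + E) two_ne_zero]

lemma kepler_fρ (E θ ρ p : ℝ) (hρ : ρ + E ≠ 0) :
    pdρ (keplerF E) θ ρ p = ρ / (ρ + E) - (ρ ^ 2 + p ^ 2) / (2 * (ρ + E) ^ 2) - 1 := by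
  rw [kepler_pdρ_eq _ θ ρ p (fun t => (t ^ 2 + p ^ 2) / (2 * (t + E)) - t)
    (Filter.Eventually.of_forall fun t => rfl)]
  have h2 : 2 * (ρ + E) ≠ 0 := by
    intro h; exact hρ (by linarith)
  have h : HasDerivAt (fun t : ℝ => (t ^ 2 + p ^ 2) / (2 * (t + E)) - t)
      (((2 * ρ ^ 1) * (2 * (ρ + E)) - (ρ ^ 2 + p ^ 2) * (2 * 1)) / (2 * (ρ + E)) ^ 2 - 1) ρ :=
    (((hasDerivAt_pow 2 ρ).add_const (p ^ 2)).div
      (((hasDerivAt_id ρ).add_const E).const_mul 2) h2).sub (hasDerivAt_id ρ)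
  rw [h.deriv]
  field_simp

lemma kepler_fpp (E θ ρ p : ℝ) : pdp (pdp (keplerF E)) θ ρ p = 1 / (ρ + E) := by
  rw [kepler_pdp_eq _ θ ρ p (fun t => t / (ρ + E)) (fun t => kepler_fp E θ ρ t)]
  exact ((hasDerivAt_id p).div_const (ρ + E)).deriv

lemma kepler_fpρ (E θ ρ p : ℝ) (hρ : ρ + E ≠ 0) :
    pdρ (pdp (keplerF E)) θ ρ p = -p / (ρ + E) ^ 2 := by
  rw [kepler_pdρ_eq _ θ ρ p (fun t => p / (t + E))
    (Filter.Eventually.of_forall fun t => kepler_fp E θ t p)]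
  have h : HasDerivAt (fun t : ℝ => p / (t + E))
      ((0 * (ρ + E) - p * 1) / (ρ + E) ^ 2) ρ :=
    (hasDerivAt_const ρ p).div ((hasDerivAt_id ρ).add_const E) hρ
  rw [h.deriv]; ring

lemma kepler_fρρ (E θ ρ p : ℝ) (hρ : ρ + E ≠ 0) :
    pdρ (pdρ (keplerF E)) θ ρ p = E / (ρ + E) ^ 2 - (ρ * E - p ^ 2) / (ρ + E) ^ 3 := by
  rw [kepler_pdρ_eq _ θ ρ p
    (fun t => t / (t + E) - (t ^ 2 + p ^ 2) / (2 * (t + E) ^ 2) - 1)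
    ((kepler_nhds_ne E ρ hρ).mono fun t ht => kepler_fρ E θ t p ht)]
  have h2 : 2 * (ρ + E) ^ 2 ≠ 0 := by
    simp [pow_eq_zero_iff, hρ]
  have h : HasDerivAt
      (fun t : ℝ => t / (t + E) - (t ^ 2 + p ^ 2) / (2 * (t + E) ^ 2) - 1)
      ((1 * (ρ + E) - ρ * 1) / (ρ + E) ^ 2 -
        ((2 * ρ ^ 1) * (2 * (ρ + E) ^ 2) - (ρ ^ 2 + p ^ 2) * (2 * (2 * (ρ + E) ^ 1 * 1))) /
          (2 * (ρ + E) ^ 2) ^ 2) ρ := by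
    have ha : HasDerivAt (fun t : ℝ => t / (t + E))
        ((1 * (ρ + E) - ρ * 1) / (ρ + E) ^ 2) ρ :=
      (hasDerivAt_id ρ).div ((hasDerivAt_id ρ).add_const E) hρ
    have hb : HasDerivAt (fun t : ℝ => (t ^ 2 + p ^ 2) / (2 * (t + E) ^ 2))
        (((2 * ρ ^ 1) * (2 * (ρ + E) ^ 2) - (ρ ^ 2 + p ^ 2) * (2 * (2 * (ρ + E) ^ 1 * 1))) /
          (2 * (ρ + E) ^ 2) ^ 2) ρ :=
      ((hasDerivAt_pow 2 ρ).add_const (p ^ 2)).div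
        ((((hasDerivAt_id ρ).add_const E).pow 2).const_mul 2) h2
    exact (ha.sub hb).sub_const 1
  rw [h.deriv]
  field_simp
  ring

lemma kepler_pdp_fpp (E θ ρ p : ℝ) : pdp (pdp (pdp (keplerF E))) θ ρ p = 0 := by
  rw [kepler_pdp_eq _ θ ρ p (fun _ => 1 / (ρ + E)) (fun t => kepler_fpp E θ ρ t)]
  exact deriv_const p _

lemma kepler_pdρ_fpp (E θ ρ p : ℝ) (hρ : ρ + E ≠ 0) :
    pdρ (pdp (pdp (keplerF E))) θ ρ p = -1 / (ρ + E) ^ 2 := by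
  rw [kepler_pdρ_eq _ θ ρ p (fun t => 1 / (t + E))
    (Filter.Eventually.of_forall fun t => kepler_fpp E θ t p)]
  have h : HasDerivAt (fun t : ℝ => 1 / (t + E))
      ((0 * (ρ + E) - 1 * 1) / (ρ + E) ^ 2) ρ :=
    (hasDerivAt_const ρ 1).div ((hasDerivAt_id ρ).add_const E) hρ
  rw [h.deriv]; ring

lemma kepler_Dfpp (E θ ρ p : ℝ) (hρ : ρ + E ≠ 0) :
    Dop (keplerF E) (pdp (pdp (keplerF E))) θ ρ p = -p / (ρ + E) ^ 2 := by
  unfold Dop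
  rw [kepler_pdθ_zero _ θ ρ p (fun t => by rw [kepler_fpp, kepler_fpp]),
    kepler_pdρ_fpp E θ ρ p hρ, kepler_pdp_fpp E θ ρ p]
  ring

lemma kepler_deriv_aux (E ρ p : ℝ) (hρ : ρ + E ≠ 0) :
    deriv (fun t : ℝ => -p / (t + E) ^ 2) ρ = 2 * p / (ρ + E) ^ 3 := by
  have h : HasDerivAt (fun t : ℝ => -p / (t + E) ^ 2)
      ((0 * (ρ + E) ^ 2 - (-p) * (2 * (ρ + E) ^ 1 * 1)) / ((ρ + E) ^ 2) ^ 2) ρ :=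
    (hasDerivAt_const ρ (-p)).div (((hasDerivAt_id ρ).add_const E).pow 2)
      (pow_ne_zero 2 hρ)
  rw [h.deriv]
  field_simp
  ring

lemma kepler_deriv_aux2 (E ρ p : ℝ) :
    deriv (fun t : ℝ => -t / (ρ + E) ^ 2) p = -1 / (ρ + E) ^ 2 := by
  have h : HasDerivAt (fun t : ℝ => -t / (ρ + E) ^ 2)
      (-1 / (ρ + E) ^ 2) p := (hasDerivAt_id p).neg.div_const ((ρ + E) ^ 2)
  exact h.deriv

lemma kepler_Dfpρ (E θ ρ p : ℝ) (hρ : ρ + E ≠ 0) :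
    Dop (keplerF E) (pdρ (pdp (keplerF E))) θ ρ p =
      p * (2 * p / (ρ + E) ^ 3) + keplerF E θ ρ p * (-1 / (ρ + E) ^ 2) := by
  unfold Dop
  rw [kepler_pdθ_zero _ θ ρ p
      (fun t => by rw [kepler_fpρ E t ρ p hρ, kepler_fpρ E θ ρ p hρ]),
    kepler_pdρ_eq _ θ ρ p (fun t => -p / (t + E) ^ 2)
      ((kepler_nhds_ne E ρ hρ).mono fun t ht => kepler_fpρ E θ t p ht),
    kepler_pdp_eq _ θ ρ p (fun t => -t / (ρ + E) ^ 2)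
      (fun t => kepler_fpρ E θ ρ t hρ),
    kepler_deriv_aux E ρ p hρ, kepler_deriv_aux2 E ρ p]
  ring

lemma kepler_D2fpp (E θ ρ p : ℝ) (hρ : ρ + E ≠ 0) :
    Dop (keplerF E) (Dop (keplerF E) (pdp (pdp (keplerF E)))) θ ρ p =
      p * (2 * p / (ρ + E) ^ 3) + keplerF E θ ρ p * (-1 / (ρ + E) ^ 2) := by
  conv_lhs => rw [Dop]
  rw [kepler_pdθ_zero _ θ ρ p
      (fun t => by rw [kepler_Dfpp E t ρ p hρ, kepler_Dfpp E θ ρ p hρ]),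
    kepler_pdρ_eq _ θ ρ p (fun t => -p / (t + E) ^ 2)
      ((kepler_nhds_ne E ρ hρ).mono fun t ht => kepler_Dfpp E θ t p ht),
    kepler_pdp_eq _ θ ρ p (fun t => -t / (ρ + E) ^ 2)
      (fun t => kepler_Dfpp E θ ρ t hρ),
    kepler_deriv_aux E ρ p hρ, kepler_deriv_aux2 E ρ p]
  ring


lemma kepler_I2 (E θ ρ p : ℝ) (hρ : ρ + E ≠ 0) :
    tresseI₂ (keplerF E) θ ρ p = 9 * E ^ 2 / (E + ρ) ^ 3 := by
  have hρ' : E + ρ ≠ 0 := by rwa [add_comm]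
  unfold tresseI₂
  rw [kepler_D2fpp E θ ρ p hρ, kepler_Dfpρ E θ ρ p hρ, kepler_fp E θ ρ p,
    kepler_fpρ E θ ρ p hρ, kepler_Dfpp E θ ρ p hρ, kepler_fpp E θ ρ p,
    kepler_fρ E θ ρ p hρ, kepler_fρρ E θ ρ p hρ]
  simp only [keplerF]
  field_simp
  ring


/-- The reciprocal-polar form of Kepler orbits of fixed energy E
satisfies `ρ'' = (ρ²+ρ'²)/(2(ρ+E)) − ρ`, and the Tresse relative invariant of
this second-order ODE is `I₂ = 9E²/(E+ρ)³`; in particular `I₂ ≠ 0` for `E ≠ 0`. -/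
theorem fixed_energy_kepler_tresse_invariant (E : ℝ) :
    (∀ a b c : ℝ, a ^ 2 + b ^ 2 - c ^ 2 = 2 * c * E →
      ∀ ρfun : ℝ → ℝ, (∀ θ, ρfun θ = a * Real.cos θ + b * Real.sin θ + c) →
      ∀ θ, ρfun θ + E ≠ 0 →
        deriv (deriv ρfun) θ = keplerF E θ (ρfun θ) (deriv ρfun θ)) ∧
    (∀ θ ρ p : ℝ, ρ + E ≠ 0 →
        tresseI₂ (keplerF E) θ ρ p = 9 * E ^ 2 / (E + ρ) ^ 3) ∧
    (E ≠ 0 → ∀ θ ρ p : ℝ, ρ + E ≠ 0 → tresseI₂ (keplerF E) θ ρ p ≠ 0) := by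
  refine ⟨?_, fun θ ρ p hρ => kepler_I2 E θ ρ p hρ, ?_⟩
  · intro a b c habc ρfun hρf θ hne
    have hfun : ρfun = fun x => a * Real.cos x + b * Real.sin x + c := funext hρf
    have hd1 : deriv ρfun = fun x => a * (-Real.sin x) + b * Real.cos x := by
      funext x
      rw [hfun]
      exact ((((Real.hasDerivAt_cos x).const_mul a).add
        ((Real.hasDerivAt_sin x).const_mul b)).add_const c).deriv
    have hd2 : deriv (deriv ρfun) θ = c - ρfun θ := by
      rw [hd1]
      have h : HasDerivAt (fun x => a * (-Real.sin x) + b * Real.cos x)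
          (a * (-Real.cos θ) + b * (-Real.sin θ)) θ :=
        (((Real.hasDerivAt_sin θ).neg.const_mul a).add
          ((Real.hasDerivAt_cos θ).const_mul b))
      rw [h.deriv, hρf θ]; ring
    have hkey : (ρfun θ) ^ 2 + (deriv ρfun θ) ^ 2 = 2 * c * (ρfun θ + E) := by
      rw [hρf θ, hd1]
      simp only
      linear_combination (a ^ 2 + b ^ 2) * Real.sin_sq_add_cos_sq θ + habc
    rw [hd2]
    simp only [keplerF]
    rw [hkey]
    field_simp
  · intro hE θ ρ p hρ
    rw [kepler_I2 E θ ρ p hρ]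
    exact div_ne_zero (by positivity) (pow_ne_zero 3 (by rwa [add_comm] at hρ))
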